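/- Let 𝒴(4) ⊆ ℂ⁸ be the set of tuples (q,Q,e,b_0,b_1,b_2,b_3,b_4) satisfying, for all 1 ≤ j ≤ k ≤ 3: e·b_j = q·b_{j+1} + Q·b_{j−1} and b_j·b_k − b_{j−1}·b_{k+1} = q^{3−k}·Q^{j−1}·Ψ_{k−j}(q,Q,e). Then there exists a ℂ-linear map L : ℂ⁸ → Mat₃(ℂ) (the space of 3×3 complex matrices) whose restriction to 𝒴(4) is a bijection from 𝒴(4) onto {A ∈ Mat₃(ℂ) | A·A = 0}, the closure of the minimal nilpotent orbit of 𝔰𝔩₃. -/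

import Mathlib

/-- The sequence `Ψ_m(q,Q,e)`: `Ψ 0 = 1`, `Ψ 1 = e`, `Ψ m = e·Ψ (m−1) − qQ·Ψ (m−2)`. -/
noncomputable def PsiC (p e : ℂ) : ℕ → ℂ
  | 0 => 1
  | 1 => e
  | m + 2 => e * PsiC p e (m + 1) - p * PsiC p e m

/-- The `i`-th coordinate of a point of `ℂ^(d+4)`
(`i = 0` is `q`, `i = 1` is `Q`, `i = 2` is `e`, `i = 3+j` is `b_j` for `0 ≤ j ≤ d`). -/
noncomputable def coord {d : ℕ} (v : Fin (d + 4) → ℂ) (i : ℕ) : ℂ :=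
  if h : i < d + 4 then v ⟨i, h⟩ else 0

/-- The variety `𝒴(d) ⊆ ℂ^(d+4)`. -/
def Yset (d : ℕ) : Set (Fin (d + 4) → ℂ) :=
  {v | ∀ j k : ℕ, 1 ≤ j → j ≤ k → k ≤ d - 1 →
    coord v 2 * coord v (3 + j) =
        coord v 0 * coord v (3 + (j + 1)) + coord v 1 * coord v (3 + (j - 1)) ∧
    coord v (3 + j) * coord v (3 + k) - coord v (3 + (j - 1)) * coord v (3 + (k + 1)) =
      coord v 0 ^ (d - k - 1) * coord v 1 ^ (j - 1) *
        PsiC (coord v 0 * coord v 1) (coord v 2) (k - j)}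

/-- Auxiliary linear map `ℂ⁸ → Mat₃`. -/
noncomputable def Lmap14 : (Fin (4 + 4) → ℂ) →ₗ[ℂ] Matrix (Fin 3) (Fin 3) ℂ where
  toFun v :=
    !![v 5 + v 2, -2 * (v 4 + v 0), v 3;
       v 6 + v 1, -2 * v 5, v 4 - v 0;
       v 7, -2 * (v 6 - v 1), v 5 - v 2]
  map_add' x y := by
    ext i j
    fin_cases i <;> fin_cases j <;>
      simp [Matrix.add_apply, Pi.add_apply] <;> ring
  map_smul' c x := by
    ext i j
    fin_cases i <;> fin_cases j <;>
      simp [Matrix.smul_apply, Pi.smul_apply, smul_eq_mul] <;> ring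

/-- Auxiliary inverse `Mat₃ → ℂ⁸`. -/
noncomputable def gmap14 (A : Matrix (Fin 3) (Fin 3) ℂ) : Fin (4 + 4) → ℂ :=
  fun i =>
    if i.val = 0 then (-(A 0 1) / 2 - A 1 2) / 2
    else if i.val = 1 then (A 1 0 + A 2 1 / 2) / 2
    else if i.val = 2 then (A 0 0 - A 2 2) / 2
    else if i.val = 3 then A 0 2
    else if i.val = 4 then (A 1 2 - A 0 1 / 2) / 2
    else if i.val = 5 then -(A 1 1) / 2
    else if i.val = 6 then (A 1 0 - A 2 1 / 2) / 2
    else A 2 0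

private lemma gm0 (A : Matrix (Fin 3) (Fin 3) ℂ) : gmap14 A 0 = (-(A 0 1) / 2 - A 1 2) / 2 := rfl
private lemma gm1 (A : Matrix (Fin 3) (Fin 3) ℂ) : gmap14 A 1 = (A 1 0 + A 2 1 / 2) / 2 := rfl
private lemma gm2 (A : Matrix (Fin 3) (Fin 3) ℂ) : gmap14 A 2 = (A 0 0 - A 2 2) / 2 := rfl
private lemma gm3 (A : Matrix (Fin 3) (Fin 3) ℂ) : gmap14 A 3 = A 0 2 := rfl
private lemma gm4 (A : Matrix (Fin 3) (Fin 3) ℂ) : gmap14 A 4 = (A 1 2 - A 0 1 / 2) / 2 := rfl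
private lemma gm5 (A : Matrix (Fin 3) (Fin 3) ℂ) : gmap14 A 5 = -(A 1 1) / 2 := rfl
private lemma gm6 (A : Matrix (Fin 3) (Fin 3) ℂ) : gmap14 A 6 = (A 1 0 - A 2 1 / 2) / 2 := rfl
private lemma gm7 (A : Matrix (Fin 3) (Fin 3) ℂ) : gmap14 A 7 = A 2 0 := rfl

private lemma f30 (h : 0 < 3) : (⟨0, h⟩ : Fin 3) = (0 : Fin 3) := rfl
private lemma f31 (h : 1 < 3) : (⟨1, h⟩ : Fin 3) = (1 : Fin 3) := rfl
private lemma f32 (h : 2 < 3) : (⟨2, h⟩ : Fin 3) = (2 : Fin 3) := rfl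
private lemma f80 (h : 0 < 4 + 4) : (⟨0, h⟩ : Fin (4 + 4)) = (0 : Fin (4 + 4)) := rfl
private lemma f81 (h : 1 < 4 + 4) : (⟨1, h⟩ : Fin (4 + 4)) = (1 : Fin (4 + 4)) := rfl
private lemma f82 (h : 2 < 4 + 4) : (⟨2, h⟩ : Fin (4 + 4)) = (2 : Fin (4 + 4)) := rfl
private lemma f83 (h : 3 < 4 + 4) : (⟨3, h⟩ : Fin (4 + 4)) = (3 : Fin (4 + 4)) := rfl
private lemma f84 (h : 4 < 4 + 4) : (⟨4, h⟩ : Fin (4 + 4)) = (4 : Fin (4 + 4)) := rfl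
private lemma f85 (h : 5 < 4 + 4) : (⟨5, h⟩ : Fin (4 + 4)) = (5 : Fin (4 + 4)) := rfl
private lemma f86 (h : 6 < 4 + 4) : (⟨6, h⟩ : Fin (4 + 4)) = (6 : Fin (4 + 4)) := rfl
private lemma f87 (h : 7 < 4 + 4) : (⟨7, h⟩ : Fin (4 + 4)) = (7 : Fin (4 + 4)) := rfl

private lemma fix00 (A : Matrix (Fin 3) (Fin 3) ℂ) (ht : A 0 0 + A 1 1 + A 2 2 = 0) :
    A 1 1 * (-1 / 2) + A 0 0 * (1 / 2) + A 2 2 * (-1 / 2) = A 0 0 := by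
  linear_combination (-(1 : ℂ)/2) * ht

private lemma fix22 (A : Matrix (Fin 3) (Fin 3) ℂ) (ht : A 0 0 + A 1 1 + A 2 2 = 0) :
    A 1 1 * (-1 / 2) + A 0 0 * (-1 / 2) + A 2 2 * (1 / 2) = A 2 2 := by
  linear_combination (-(1 : ℂ)/2) * ht

/-- There is a `ℂ`-linear map `L : ℂ⁸ → Mat₃(ℂ)` restricting to a
bijection from `𝒴(4)` onto `{A ∈ Mat₃(ℂ) | A·A = 0}`, the closure of the minimal
nilpotent orbit of `𝔰𝔩₃`. -/
theorem stmt_14 :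
    ∃ L : (Fin (4 + 4) → ℂ) →ₗ[ℂ] Matrix (Fin 3) (Fin 3) ℂ,
      Set.BijOn L (Yset 4) {A : Matrix (Fin 3) (Fin 3) ℂ | A * A = 0} := by
  refine ⟨Lmap14, ?_, ?_, ?_⟩
  · -- MapsTo
    intro v hv
    have h11 := hv 1 1 (by norm_num) (by norm_num) (by norm_num)
    have h12 := hv 1 2 (by norm_num) (by norm_num) (by norm_num)
    have h13 := hv 1 3 (by norm_num) (by norm_num) (by norm_num)
    have h22 := hv 2 2 (by norm_num) (by norm_num) (by norm_num)
    have h23 := hv 2 3 (by norm_num) (by norm_num) (by norm_num)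
    have h33 := hv 3 3 (by norm_num) (by norm_num) (by norm_num)
    simp only [coord, PsiC] at h11 h12 h13 h22 h23 h33
    norm_num [f80, f81, f82, f83, f84, f85, f86, f87, PsiC] at h11 h12 h13 h22 h23 h33
    obtain ⟨E1, F1⟩ := h11
    obtain ⟨-, F2⟩ := h12
    obtain ⟨-, F3⟩ := h13
    obtain ⟨E2, F4⟩ := h22
    obtain ⟨-, F5⟩ := h23
    obtain ⟨E3, F6⟩ := h33
    show Lmap14 v * Lmap14 v = 0
    ext i j
    fin_cases i <;> fin_cases j <;>
      simp [Lmap14, Matrix.mul_apply, Fin.sum_univ_three, f30, f31, f32]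
    · linear_combination 2 * E2 - F3 + F4
    · linear_combination -2 * E1 + 2 * F2
    · linear_combination -2 * F1
    · linear_combination E3 - F5
    · linear_combination 4 * F4
    · linear_combination -E1 - F2
    · linear_combination -2 * F6
    · linear_combination 2 * E3 + 2 * F5
    · linear_combination -2 * E2 - F3 + F4
  · -- InjOn
    have hleft : ∀ v : Fin (4 + 4) → ℂ, gmap14 (Lmap14 v) = v := by
      intro v
      funext i
      fin_cases i <;>
        simp [gmap14, Lmap14] <;> ring
    intro x _ y _ hxy
    have := congrArg gmap14 hxy
    rwa [hleft, hleft] at this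
  · -- SurjOn
    intro A hA
    have hA' : A * A = 0 := hA
    have hnil : IsNilpotent A := ⟨2, by rw [sq]; exact hA'⟩
    have htr0 : Matrix.trace A = 0 :=
      (Matrix.isNilpotent_trace_of_isNilpotent hnil).eq_zero
    have ht : A 0 0 + A 1 1 + A 2 2 = 0 := by
      simpa [Matrix.trace, Matrix.diag, Fin.sum_univ_three] using htr0
    have hE : ∀ i j : Fin 3, A i 0 * A 0 j + A i 1 * A 1 j + A i 2 * A 2 j = 0 := by
      intro i j
      have := congrFun (congrFun hA' i) j
      simpa [Matrix.mul_apply, Fin.sum_univ_three] using this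
    have G0 := hE 0 0
    have G1 := hE 0 1
    have G2 := hE 0 2
    have G3 := hE 1 0
    have G4 := hE 1 1
    have G5 := hE 1 2
    have G6 := hE 2 0
    have G7 := hE 2 1
    have G8 := hE 2 2
    refine ⟨gmap14 A, ?_, ?_⟩
    · -- gmap14 A ∈ Yset 4
      intro j k hj hjk hk
      have hk3 : k ≤ 3 := hk
      interval_cases k <;> interval_cases j <;>
        constructor <;>
          (simp only [coord, PsiC]; norm_num [f80, f81, f82, f83, f84, f85, f86, f87, gm0, gm1, gm2, gm3, gm4, gm5, gm6, gm7, PsiC])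
      · linear_combination (-1/4 : ℂ) * G1 - (1/2 : ℂ) * G5 +
          ((1/8 : ℂ) * A 0 1 + (1/4 : ℂ) * A 1 2) * ht
      · linear_combination (-1/2 : ℂ) * G2 + (1/2 : ℂ) * A 0 2 * ht
      · linear_combination (-1/4 : ℂ) * G1 - (1/2 : ℂ) * G5 +
          ((1/8 : ℂ) * A 0 1 + (1/4 : ℂ) * A 1 2) * ht
      · linear_combination (1/4 : ℂ) * G1 - (1/2 : ℂ) * G5 +
          ((-1/8 : ℂ) * A 0 1 + (1/4 : ℂ) * A 1 2) * ht
      · linear_combination (1/4 : ℂ) * G0 - (1/4 : ℂ) * G8 +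
          ((-1/4 : ℂ) * A 0 0 + (1/4 : ℂ) * A 2 2) * ht
      · linear_combination (1/4 : ℂ) * G4
      · linear_combination (-1/4 : ℂ) * G1 - (1/2 : ℂ) * G5 +
          ((1/8 : ℂ) * A 0 1 + (1/4 : ℂ) * A 1 2) * ht
      · linear_combination (-1/2 : ℂ) * G0 + (1/4 : ℂ) * G4 - (1/2 : ℂ) * G8 +
          ((1/4 : ℂ) * A 0 0 - (1/4 : ℂ) * A 1 1 + (1/4 : ℂ) * A 2 2) * ht
      · linear_combination (1/4 : ℂ) * G0 - (1/4 : ℂ) * G8 +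
          ((-1/4 : ℂ) * A 0 0 + (1/4 : ℂ) * A 2 2) * ht
      · linear_combination (-1/2 : ℂ) * G3 + (1/4 : ℂ) * G7 +
          ((1/4 : ℂ) * A 1 0 - (1/8 : ℂ) * A 2 1) * ht
      · linear_combination (1/2 : ℂ) * G3 + (1/4 : ℂ) * G7 +
          ((-1/4 : ℂ) * A 1 0 - (1/8 : ℂ) * A 2 1) * ht
      · linear_combination (-1/2 : ℂ) * G6 + (1/2 : ℂ) * A 2 0 * ht
    · -- L (g A) = A
      show Lmap14 (gmap14 A) = A
      ext i j
      fin_cases i <;> fin_cases j <;>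
        simp [Lmap14, gm0, gm1, gm2, gm3, gm4, gm5, gm6, gm7, f30, f31, f32] <;>
        first
        | rfl
        | ring
        | skip
      all_goals linear_combination (-(1 : ℂ)/2) * ht
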